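/- Let n ≥ 1, let f : ℝ → (Hermitian complex n×n matrices) be differentiable at λ with derivative f'(λ), and let Z(t) = Re trace(exp(−f(t))) (a positive real number). Then the generating functional t ↦ W(f(t)) = −log Z(t) is differentiable at λ with derivative Re trace(exp(−f(λ))·f'(λ)) / Z(λ); that is, dW(f) = ⟨df⟩_f. -/

import Mathlib

open Matrix

attribute [local instance] Matrix.linftyOpNormedRing Matrix.linftyOpNormedAlgebra

open NormedSpace

theorem trace_exp_re_pos {n : ℕ} (hn : 1 ≤ n) (A : Matrix (Fin n) (Fin n) ℂ)
    (hA : A.IsHermitian) : 0 < (Matrix.trace (NormedSpace.exp A)).re := by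
  have : Nonempty (Fin n) := ⟨⟨0, hn⟩⟩
  set U : Matrix (Fin n) (Fin n) ℂ := (hA.eigenvectorUnitary : Matrix (Fin n) (Fin n) ℂ) with hUdef
  have hsU : star U * U = 1 :=
    congrArg Subtype.val (Unitary.star_mul_self hA.eigenvectorUnitary)
  have hinv : U⁻¹ = star U := Matrix.inv_eq_left_inv hsU
  have hU : IsUnit U := by
    have := congrArg Matrix.det hsU
    rw [Matrix.det_mul, Matrix.det_one] at this
    exact (Matrix.isUnit_iff_isUnit_det _).2 (IsUnit.of_mul_eq_one _ ((mul_comm _ _).trans this))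
  have h1 : NormedSpace.exp A =
      U * NormedSpace.exp (diagonal (RCLike.ofReal ∘ hA.eigenvalues)) * U⁻¹ := by
    conv_lhs => rw [hA.spectral_theorem]
    rw [Unitary.conjStarAlgAut_apply, ← hinv]
    exact Matrix.exp_conj U _ hU
  have h2 : Matrix.trace (NormedSpace.exp A)
      = ∑ i, Complex.exp ((hA.eigenvalues i : ℂ)) := by
    rw [h1, Matrix.trace_mul_comm, ← Matrix.mul_assoc,
      Matrix.nonsing_inv_mul _ ((Matrix.isUnit_iff_isUnit_det _).1 hU), Matrix.one_mul,
      Matrix.exp_diagonal, Matrix.trace_diagonal]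
    congr 1; funext i
    rw [Pi.exp_def]
    simp [Complex.exp_eq_exp_ℂ]
  rw [h2]
  have h3 : (∑ i, Complex.exp ((hA.eigenvalues i : ℂ))).re
      = ∑ i, Real.exp (hA.eigenvalues i) := by
    simp [Complex.re_sum, ← Complex.ofReal_exp]
  rw [h3]
  exact Finset.sum_pos (fun i _ => Real.exp_pos _) Finset.univ_nonempty

section

noncomputable abbrev matrixNormTopology (n : ℕ) : TopologicalSpace (Matrix (Fin n) (Fin n) ℂ) :=
  PseudoMetricSpace.toUniformSpace.toTopologicalSpace

attribute [local instance] matrixNormTopology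

variable {n : ℕ}

noncomputable abbrev trCLM (n : ℕ) : Matrix (Fin n) (Fin n) ℂ →L[ℂ] ℂ :=
  LinearMap.toContinuousLinearMap (Matrix.traceLinearMap (Fin n) ℂ ℂ)

theorem trCLM_apply (M : Matrix (Fin n) (Fin n) ℂ) : trCLM n M = Matrix.trace M := rfl

theorem norm_trCLM_apply_le (M : Matrix (Fin n) (Fin n) ℂ) : ‖trCLM n M‖ ≤ n * ‖M‖ := by
  have h1 : ∀ i j, ‖M i j‖ ≤ ‖M‖ := by
    intro i j
    have hrow : (∑ j, ‖M i j‖₊) ≤ ‖M‖₊ := by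
      rw [Matrix.linfty_opNNNorm_def]
      exact Finset.le_sup (f := fun i => ∑ j, ‖M i j‖₊) (Finset.mem_univ i)
    have : ‖M i j‖₊ ≤ ‖M‖₊ :=
      le_trans (Finset.single_le_sum (f := fun j => ‖M i j‖₊) (fun _ _ => zero_le)
        (Finset.mem_univ j)) hrow
    exact_mod_cast this
  calc ‖trCLM n M‖ = ‖∑ i, M i i‖ := rfl
    _ ≤ ∑ i : Fin n, ‖M i i‖ := norm_sum_le _ _
    _ ≤ ∑ _i : Fin n, ‖M‖ := Finset.sum_le_sum fun i _ => h1 i i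
    _ = n * ‖M‖ := by simp [mul_comm]

theorem hasFDerivAt_pow_matrix (k : ℕ) (Y : Matrix (Fin n) (Fin n) ℂ) :
    HasFDerivAt (fun X : Matrix (Fin n) (Fin n) ℂ => X ^ k)
      (∑ i ∈ Finset.range k,
        ContinuousLinearMap.mulLeftRight ℂ _ (Y ^ i) (Y ^ (k - 1 - i))) Y := by
  induction k with
  | zero => simpa using hasFDerivAt_const (1 : Matrix (Fin n) (Fin n) ℂ) Y
  | succ k ih =>
    have h := (hasFDerivAt_id Y).mul' ih
    simp only [Pi.mul_def, id_eq, ← pow_succ'] at h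
    refine h.congr_fderiv (Eq.symm ?_)
    refine ContinuousLinearMap.ext fun H => ?_
    simp only [ContinuousLinearMap.add_apply, ContinuousLinearMap.smul_apply,
      ContinuousLinearMap.smulRight_apply, ContinuousLinearMap.coe_sum', Finset.sum_apply,
      ContinuousLinearMap.mulLeftRight_apply, ContinuousLinearMap.coe_id', id_eq, smul_eq_mul]
    rw [Finset.sum_range_succ', Finset.mul_sum]
    congr 1
    · refine Finset.sum_congr rfl fun i _ => ?_
      have h1 : k + 1 - 1 - (i + 1) = k - 1 - i := by omega
      have h2 : k - (i + 1) = k - 1 - i := by omega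
      simp [h1, h2, pow_succ', mul_assoc]
    · simp

noncomputable def expDerivAux (n k : ℕ) (Y : Matrix (Fin n) (Fin n) ℂ) :
    Matrix (Fin n) (Fin n) ℂ →L[ℂ] ℂ :=
  ((k : ℂ) * (Nat.factorial k : ℂ)⁻¹) •
    ((trCLM n).comp ((ContinuousLinearMap.mul ℂ (Matrix (Fin n) (Fin n) ℂ)) (Y ^ (k - 1))))

theorem expDerivAux_apply (k : ℕ) (Y H : Matrix (Fin n) (Fin n) ℂ) :
    expDerivAux n k Y H = (k : ℂ) * (Nat.factorial k : ℂ)⁻¹ * Matrix.trace (Y ^ (k - 1) * H) := by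
  simp [expDerivAux, trCLM_apply, smul_eq_mul]

theorem hasFDerivAt_summand (k : ℕ) (Y : Matrix (Fin n) (Fin n) ℂ) :
    HasFDerivAt (fun X : Matrix (Fin n) (Fin n) ℂ => ((Nat.factorial k : ℂ))⁻¹ • trCLM n (X ^ k))
      (expDerivAux n k Y) Y := by
  have h := (((trCLM n).hasFDerivAt.comp Y (hasFDerivAt_pow_matrix k Y))).const_smul
    (((Nat.factorial k : ℂ))⁻¹)
  refine h.congr_fderiv (Eq.symm ?_)
  refine ContinuousLinearMap.ext fun H => ?_
  rw [expDerivAux_apply]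
  simp only [ContinuousLinearMap.smul_apply, ContinuousLinearMap.coe_comp', Function.comp_apply,
    ContinuousLinearMap.coe_sum', Finset.sum_apply, ContinuousLinearMap.mulLeftRight_apply,
    smul_eq_mul]
  rw [map_sum]
  have hterm : ∀ i ∈ Finset.range k,
      trCLM n (Y ^ i * H * Y ^ (k - 1 - i)) = Matrix.trace (Y ^ (k - 1) * H) := by
    intro i hi
    rw [Finset.mem_range] at hi
    rw [trCLM_apply, Matrix.trace_mul_comm, ← Matrix.mul_assoc, ← pow_add]
    congr 3
    omega
  rw [Finset.sum_congr rfl hterm, Finset.sum_const, Finset.card_range]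
  simp [mul_comm, mul_assoc, mul_left_comm]

theorem norm_matrix_pow_le (hn : 1 ≤ n) (Y : Matrix (Fin n) (Fin n) ℂ) {R : ℝ}
    (hY : ‖Y‖ ≤ R) (m : ℕ) : ‖Y ^ m‖ ≤ R ^ m := by
  have : Nonempty (Fin n) := ⟨⟨0, hn⟩⟩
  induction m with
  | zero => simp
  | succ m ih =>
    calc ‖Y ^ (m + 1)‖ = ‖Y * Y ^ m‖ := by rw [pow_succ']
      _ ≤ ‖Y‖ * ‖Y ^ m‖ := norm_mul_le _ _
      _ ≤ R * R ^ m := by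
          apply mul_le_mul hY ih (norm_nonneg _) ((norm_nonneg Y).trans hY)
      _ = R ^ (m + 1) := (pow_succ' R m).symm

theorem norm_expDerivAux_le (hn : 1 ≤ n) (k : ℕ) (Y : Matrix (Fin n) (Fin n) ℂ) {R : ℝ}
    (hY : ‖Y‖ ≤ R) :
    ‖expDerivAux n k Y‖ ≤ (k : ℝ) * ((Nat.factorial k : ℝ))⁻¹ * (n * R ^ (k - 1)) := by
  have hR : 0 ≤ R := (norm_nonneg Y).trans hY
  apply ContinuousLinearMap.opNorm_le_bound
  · positivity
  intro H
  rw [expDerivAux_apply]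
  calc ‖(k : ℂ) * (Nat.factorial k : ℂ)⁻¹ * Matrix.trace (Y ^ (k - 1) * H)‖
      = (k : ℝ) * ((Nat.factorial k : ℝ))⁻¹ * ‖Matrix.trace (Y ^ (k - 1) * H)‖ := by
        rw [norm_mul, norm_mul]
        norm_num
    _ ≤ (k : ℝ) * ((Nat.factorial k : ℝ))⁻¹ * (n * (R ^ (k - 1) * ‖H‖)) := by
        apply mul_le_mul_of_nonneg_left _ (by positivity)
        calc ‖Matrix.trace (Y ^ (k - 1) * H)‖ ≤ n * ‖Y ^ (k - 1) * H‖ :=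
              norm_trCLM_apply_le _
          _ ≤ n * (R ^ (k - 1) * ‖H‖) := by
              apply mul_le_mul_of_nonneg_left _ (by positivity)
              exact le_trans (norm_mul_le _ _)
                (mul_le_mul_of_nonneg_right (norm_matrix_pow_le hn Y hY _) (norm_nonneg _))
    _ = (k : ℝ) * ((Nat.factorial k : ℝ))⁻¹ * (n * R ^ (k - 1)) * ‖H‖ := by ring

theorem hasFDerivAt_traceExp (hn : 1 ≤ n) (Y₀ : Matrix (Fin n) (Fin n) ℂ) :
    HasFDerivAt (fun Y : Matrix (Fin n) (Fin n) ℂ => Matrix.trace (NormedSpace.exp Y))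
      ((trCLM n).comp ((ContinuousLinearMap.mul ℂ (Matrix (Fin n) (Fin n) ℂ))
        (NormedSpace.exp Y₀))) Y₀ := by
  set R : ℝ := ‖Y₀‖ + 1 with hR
  set u : ℕ → ℝ := fun k => (k : ℝ) * ((Nat.factorial k : ℝ))⁻¹ * (n * R ^ (k - 1)) with hu_def
  have hu : Summable u := by
    rw [← summable_nat_add_iff 1]
    have heq : (fun k => u (k + 1)) = fun k => (n : ℝ) * (R ^ k / (Nat.factorial k : ℝ)) := by
      funext k
      rw [hu_def]
      simp only [Nat.cast_add, Nat.cast_one, Nat.add_sub_cancel, Nat.factorial_succ,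
        Nat.cast_mul]
      have hk1 : ((k : ℝ) + 1) ≠ 0 := by positivity
      field_simp
    rw [heq]
    exact (Real.summable_pow_div_factorial R).mul_left _
  have hball : ∀ Y : Matrix (Fin n) (Fin n) ℂ, Y ∈ Metric.ball Y₀ 1 → ‖Y‖ ≤ R := by
    intro Y hY
    have h1 : ‖Y - Y₀‖ < 1 := by rwa [Metric.mem_ball, dist_eq_norm] at hY
    have h2 : Y = Y₀ + (Y - Y₀) := by abel
    calc ‖Y‖ = ‖Y₀ + (Y - Y₀)‖ := by rw [← h2]
      _ ≤ ‖Y₀‖ + ‖Y - Y₀‖ := norm_add_le _ _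
      _ ≤ ‖Y₀‖ + 1 := by linarith
  have hsum0 : Summable fun k => ((Nat.factorial k : ℂ))⁻¹ • Y₀ ^ k := by
    have := NormedSpace.expSeries_summable' (𝕂 := ℂ) Y₀
    simpa using this
  have hsumf : Summable fun k => ((Nat.factorial k : ℂ))⁻¹ • trCLM n (Y₀ ^ k) := by
    have := hsum0.mapL (trCLM n)
    simpa [_root_.map_smul] using this
  have key := hasFDerivAt_tsum_of_isPreconnected hu Metric.isOpen_ball
    (convex_ball Y₀ 1).isPreconnected
    (fun k Y _ => hasFDerivAt_summand k Y)
    (fun k Y hY => norm_expDerivAux_le hn k Y (hball Y hY))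
    (Metric.mem_ball_self one_pos) hsumf (Metric.mem_ball_self one_pos)
  have hfun : (fun Y : Matrix (Fin n) (Fin n) ℂ => ∑' k, ((Nat.factorial k : ℂ))⁻¹ • trCLM n (Y ^ k))
      = fun Y : Matrix (Fin n) (Fin n) ℂ => Matrix.trace (NormedSpace.exp Y) := by
    funext Y
    have hsY : Summable fun k => ((Nat.factorial k : ℂ))⁻¹ • Y ^ k := by
      simpa using NormedSpace.expSeries_summable' (𝕂 := ℂ) Y
    rw [← trCLM_apply, NormedSpace.exp_eq_tsum (𝕂 := ℂ)]
    rw [ContinuousLinearMap.map_tsum _ hsY]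
    exact tsum_congr fun k => ((trCLM n).map_smul _ _).symm
  have hsumD : Summable fun k => expDerivAux n k Y₀ :=
    Summable.of_norm_bounded hu fun k =>
      norm_expDerivAux_le hn k Y₀ (by rw [hR]; linarith [norm_nonneg Y₀])
  have hderiv : (∑' k, expDerivAux n k Y₀)
      = (trCLM n).comp ((ContinuousLinearMap.mul ℂ (Matrix (Fin n) (Fin n) ℂ)) (NormedSpace.exp Y₀)) := by
    refine ContinuousLinearMap.ext fun H => ?_
    have happ : (∑' k, expDerivAux n k Y₀) H = ∑' k, expDerivAux n k Y₀ H := by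
      exact ContinuousLinearMap.map_tsum (ContinuousLinearMap.apply ℂ ℂ H) hsumD
    rw [happ]
    have hAppSum : Summable fun k => expDerivAux n k Y₀ H :=
      hsumD.mapL (ContinuousLinearMap.apply ℂ ℂ H)
    -- RHS computation
    have hRHS : Matrix.trace (NormedSpace.exp Y₀ * H)
        = ∑' k, ((Nat.factorial k : ℂ))⁻¹ * Matrix.trace (Y₀ ^ k * H) := by
      have hL : Matrix.trace (NormedSpace.exp Y₀ * H)
          = ((trCLM n).comp ((ContinuousLinearMap.mul ℂ (Matrix (Fin n) (Fin n) ℂ)).flip H)) (NormedSpace.exp Y₀) := by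
        simp [trCLM_apply]
      rw [hL, NormedSpace.exp_eq_tsum (𝕂 := ℂ), ContinuousLinearMap.map_tsum _ hsum0]
      refine tsum_congr fun k => ?_
      simp [trCLM_apply, smul_mul_assoc, smul_eq_mul]
    have hR2 : ((trCLM n).comp ((ContinuousLinearMap.mul ℂ (Matrix (Fin n) (Fin n) ℂ))
        (NormedSpace.exp Y₀))) H = Matrix.trace (NormedSpace.exp Y₀ * H) := rfl
    rw [hR2, hAppSum.tsum_eq_zero_add]
    have h0 : expDerivAux n 0 Y₀ H = 0 := by
      rw [expDerivAux_apply]; simp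
    rw [h0, zero_add, hRHS]
    refine tsum_congr fun k => ?_
    rw [expDerivAux_apply]
    have h1 : k + 1 - 1 = k := rfl
    rw [h1]
    congr 1
    push_cast [Nat.factorial_succ]
    have hk : ((k : ℂ) + 1) ≠ 0 := Nat.cast_add_one_ne_zero k
    field_simp
  rw [← hfun, ← hderiv]
  exact key

end

/-- Differentiation formula `dW(f) = ⟨df⟩_f` for the generating functional:
if `f : ℝ → ℂ^{n×n}` takes Hermitian values and is differentiable at `λ` with derivative
`f'`, then `t ↦ W(f(t)) = -log Re tr(exp(-f(t)))` is differentiable at `λ` with derivative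
`Re tr(exp(-f(λ))·f') / Z(λ)`, where `Z(λ) = Re tr(exp(-f(λ)))`. -/
theorem hasDerivAt_genFunctional
    {n : ℕ} (hn : 1 ≤ n)
    (f : ℝ → Matrix (Fin n) (Fin n) ℂ)
    (hherm : ∀ t, (f t).IsHermitian)
    (f' : Matrix (Fin n) (Fin n) ℂ) (l : ℝ)
    (hf : HasDerivAt f f' l) :
    HasDerivAt (fun t => -Real.log ((Matrix.trace (NormedSpace.exp (-f t))).re))
      ((Matrix.trace (NormedSpace.exp (-f l) * f')).re
        / (Matrix.trace (NormedSpace.exp (-f l))).re) l := by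
  have hc : HasDerivAt (fun t => -f t) (-f') l := hf.neg
  have hG := hasFDerivAt_traceExp hn (-f l)
  have hcomp := ((hG.restrictScalars ℝ).comp_hasDerivAt l hc)
  have hre := Complex.reCLM.hasFDerivAt.comp_hasDerivAt l hcomp
  have hZ : 0 < (Matrix.trace (NormedSpace.exp (-f l))).re :=
    trace_exp_re_pos hn (-f l) (hherm l).neg
  have hval : Complex.reCLM
      (((trCLM n).comp ((ContinuousLinearMap.mul ℂ (Matrix (Fin n) (Fin n) ℂ))
        (NormedSpace.exp (-f l)))).restrictScalars ℝ (-f'))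
      = -((Matrix.trace (NormedSpace.exp (-f l) * f')).re) := by
    simp only [ContinuousLinearMap.coe_restrictScalars', ContinuousLinearMap.coe_comp',
      Function.comp_apply, ContinuousLinearMap.mul_apply', trCLM_apply, mul_neg,
      map_neg, Complex.reCLM_apply, Complex.neg_re]
  erw [hval] at hre
  have hlog := hre.log hZ.ne'
  have hfinal := hlog.neg
  refine hfinal.congr_deriv ?_
  rw [neg_div, neg_neg]
  rfl
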